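/- Let H be a spectral measure on Δ_{p−1} (finite Borel measure with ∫ v_j dH = 1 for each j), so H(Δ_{p−1}) = p. For each integer m ≥ 1 there exists a discrete spectral measure H_m supported on the grid V_{p,m} = {v ∈ Δ_{p−1} : m·v_j ∈ ℤ for all j} such that the associated Pickands dependence functions A and A_m satisfy sup_{w ∈ Δ_{p−1}} |A_m(w) − A(w)| ≤ p²/m. -/

import Mathlib

set_option maxHeartbeats 1000000


open MeasureTheory

/-- The unit simplex `Δ_{p-1}` in `ℝ^p`. -/
def simplex (p : ℕ) : Set (Fin p → ℝ) :=
  {v | (∀ i, 0 ≤ v i ∧ v i ≤ 1) ∧ ∑ i, v i = 1}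

/-- The Pickands dependence function of a measure `G` on the simplex. -/
noncomputable def pickandsFn {p : ℕ} (G : Measure (Fin p → ℝ)) (w : Fin p → ℝ) : ℝ :=
  ∫ v, ⨆ j, v j * w j ∂G

namespace SpectralAux

open Finset

variable {p : ℕ}

lemma iSup_eq_sup' (hp : 0 < p) (hne : (Finset.univ : Finset (Fin p)).Nonempty)
    (f : Fin p → ℝ) : (⨆ j, f j) = Finset.univ.sup' hne f := by
  haveI : Nonempty (Fin p) := Fin.pos_iff_nonempty.1 hp
  exact (Finset.sup'_univ_eq_ciSup f).symm

/-- The rounding map onto the grid `V_{p,m}`. -/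
noncomputable def Tmap (m p : ℕ) (v : Fin p → ℝ) : Fin p → ℝ := fun j =>
  (((⌊(m : ℝ) * v j⌋ : ℤ) : ℝ) +
    (if ((j : ℕ) : ℤ) < (m : ℤ) - ∑ i, ⌊(m : ℝ) * v i⌋ then (1 : ℝ) else 0)) / m

lemma Tmap_measurable (m p : ℕ) : Measurable (Tmap m p) := by
  apply measurable_pi_lambda
  intro j
  apply Measurable.div_const
  apply Measurable.add
  · exact Measurable.of_discrete.comp ((measurable_const.mul (measurable_pi_apply j)).floor)
  · have hg : Measurable (fun v : Fin p → ℝ => ∑ i, ⌊(m : ℝ) * v i⌋) :=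
      Finset.measurable_sum _ fun i _ => (measurable_const.mul (measurable_pi_apply i)).floor
    exact Measurable.ite (hg (MeasurableSet.of_discrete
      (s := {z : ℤ | ((j : ℕ) : ℤ) < (m : ℤ) - z}))) measurable_const measurable_const

lemma floor_sum_bounds (hp : 0 < p) {m : ℕ} (hm : 1 ≤ m) {v : Fin p → ℝ} (hv : v ∈ simplex p) :
    0 ≤ (m : ℤ) - ∑ i, ⌊(m : ℝ) * v i⌋ ∧ (m : ℤ) - ∑ i, ⌊(m : ℝ) * v i⌋ ≤ p := by
  have hs : ∑ i, (m : ℝ) * v i = m := by rw [← Finset.mul_sum, hv.2, mul_one]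
  have hne : (Finset.univ : Finset (Fin p)).Nonempty := by
    simpa [Finset.univ_nonempty_iff] using Fin.pos_iff_nonempty.1 hp
  constructor
  · have h1 : ((∑ i, ⌊(m : ℝ) * v i⌋ : ℤ) : ℝ) ≤ m := by
      push_cast
      calc ∑ i, ((⌊(m : ℝ) * v i⌋ : ℤ) : ℝ) ≤ ∑ i, (m : ℝ) * v i :=
            Finset.sum_le_sum fun i _ => Int.floor_le _
        _ = m := hs
    have h2 : (∑ i, ⌊(m : ℝ) * v i⌋ : ℤ) ≤ (m : ℤ) := by exact_mod_cast h1
    omega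
  · have h1 : (m : ℝ) < ((∑ i, ⌊(m : ℝ) * v i⌋ : ℤ) : ℝ) + p := by
      have h2 : ∑ i, (m : ℝ) * v i < ∑ i, (((⌊(m : ℝ) * v i⌋ : ℤ) : ℝ) + 1) :=
        Finset.sum_lt_sum_of_nonempty hne fun i _ => Int.lt_floor_add_one _
      simp only [Finset.sum_add_distrib, Finset.sum_const, Finset.card_univ,
        Fintype.card_fin, nsmul_eq_mul, mul_one] at h2
      push_cast
      push_cast at h2
      linarith [hs]
    have h2 : (m : ℤ) < (∑ i, ⌊(m : ℝ) * v i⌋ : ℤ) + p := by exact_mod_cast h1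
    omega

lemma sum_ite_lt_card {d : ℤ} (hd0 : 0 ≤ d) (hdp : d ≤ p) :
    ∑ j : Fin p, (if ((j : ℕ) : ℤ) < d then (1 : ℝ) else 0) = (d : ℝ) := by
  have htp : d.toNat ≤ p := by omega
  have hcond : ∀ j : Fin p, (((j : ℕ) : ℤ) < d) ↔ ((j : ℕ) < d.toNat) := fun j =>
    Int.lt_toNat.symm
  simp only [hcond]
  rw [Finset.sum_boole]
  have hcard : (Finset.univ.filter fun j : Fin p => (j : ℕ) < d.toNat) =
      (Finset.univ : Finset (Fin d.toNat)).map (Fin.castLEEmb htp) := by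
    ext j
    constructor
    · intro hj
      rw [Finset.mem_filter] at hj
      exact Finset.mem_map.2 ⟨⟨(j : ℕ), hj.2⟩, Finset.mem_univ _, Fin.ext rfl⟩
    · intro hj
      obtain ⟨i, -, rfl⟩ := Finset.mem_map.1 hj
      exact Finset.mem_filter.2 ⟨Finset.mem_univ _,
        by simpa [Fin.castLEEmb, Fin.castLE] using i.isLt⟩
  rw [hcard, Finset.card_map, Finset.card_univ, Fintype.card_fin]
  exact_mod_cast Int.toNat_of_nonneg hd0

lemma Tmap_sum (hp : 0 < p) {m : ℕ} (hm : 1 ≤ m) {v : Fin p → ℝ} (hv : v ∈ simplex p) :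
    ∑ j, Tmap m p v j = 1 := by
  have hm0 : (m : ℝ) ≠ 0 := by positivity
  obtain ⟨hd0, hdp⟩ := floor_sum_bounds hp hm hv
  simp only [Tmap]
  rw [← Finset.sum_div, Finset.sum_add_distrib, sum_ite_lt_card hd0 hdp]
  push_cast
  field_simp
  ring

lemma Tmap_nonneg {m : ℕ} {v : Fin p → ℝ} (hv : v ∈ simplex p) (j : Fin p) :
    0 ≤ Tmap m p v j := by
  apply div_nonneg _ (by positivity)
  apply add_nonneg
  · exact_mod_cast Int.floor_nonneg.2 (mul_nonneg (by positivity) (hv.1 j).1)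
  · split <;> norm_num

lemma Tmap_mem (hp : 0 < p) {m : ℕ} (hm : 1 ≤ m) {v : Fin p → ℝ} (hv : v ∈ simplex p) :
    Tmap m p v ∈ simplex p := by
  have hsum := Tmap_sum hp hm hv
  refine ⟨fun i => ⟨Tmap_nonneg hv i, ?_⟩, hsum⟩
  calc Tmap m p v i ≤ ∑ j, Tmap m p v j :=
        Finset.single_le_sum (fun j _ => Tmap_nonneg hv j) (Finset.mem_univ i)
    _ = 1 := hsum

lemma Tmap_grid {m : ℕ} (hm : 1 ≤ m) (v : Fin p → ℝ) (j : Fin p) :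
    ∃ k : ℤ, (m : ℝ) * Tmap m p v j = (k : ℝ) := by
  have hm0 : (m : ℝ) ≠ 0 := by positivity
  refine ⟨⌊(m : ℝ) * v j⌋ +
    (if ((j : ℕ) : ℤ) < (m : ℤ) - ∑ i, ⌊(m : ℝ) * v i⌋ then 1 else 0), ?_⟩
  rw [Tmap, mul_div_cancel₀ _ hm0]
  split <;> push_cast <;> ring

lemma Tmap_close {m : ℕ} (hm : 1 ≤ m) {v : Fin p → ℝ} (hv : v ∈ simplex p) (j : Fin p) :
    |Tmap m p v j - v j| ≤ 1 / m := by
  have hm0 : (0 : ℝ) < m := by exact_mod_cast hm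
  have heq : Tmap m p v j - v j =
      (((⌊(m : ℝ) * v j⌋ : ℤ) : ℝ) +
        (if ((j : ℕ) : ℤ) < (m : ℤ) - ∑ i, ⌊(m : ℝ) * v i⌋ then (1 : ℝ) else 0)
        - (m : ℝ) * v j) / m := by
    rw [Tmap]
    field_simp
  have h1 : ((⌊(m : ℝ) * v j⌋ : ℤ) : ℝ) ≤ (m : ℝ) * v j := Int.floor_le _
  have h2 : (m : ℝ) * v j - 1 < ((⌊(m : ℝ) * v j⌋ : ℤ) : ℝ) := Int.sub_one_lt_floor _
  have h3 : (0:ℝ) ≤ (if ((j : ℕ) : ℤ) < (m : ℤ) - ∑ i, ⌊(m : ℝ) * v i⌋ then (1:ℝ) else 0) ∧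
      (if ((j : ℕ) : ℤ) < (m : ℤ) - ∑ i, ⌊(m : ℝ) * v i⌋ then (1:ℝ) else 0) ≤ 1 := by
    constructor <;> split <;> norm_num
  rw [heq, abs_le]
  constructor
  · rw [neg_le, ← neg_div]
    gcongr
    linarith [h3.1, h3.2]
  · gcongr
    linarith [h3.1, h3.2]

lemma integrable_of_ae_bound {α : Type*} [MeasurableSpace α] {f : α → ℝ} {μ : Measure α}
    [IsFiniteMeasure μ] (hf : Measurable f) (C : ℝ) (h : ∀ᵐ v ∂μ, |f v| ≤ C) :
    Integrable f μ :=
  ⟨hf.aestronglyMeasurable,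
    HasFiniteIntegral.of_bounded (C := C) (by simpa [Real.norm_eq_abs] using h)⟩

lemma integrable_dirac_of_measurable {α : Type*} [MeasurableSpace α] {f : α → ℝ}
    (hf : Measurable f) (a : α) : Integrable f (Measure.dirac a) := by
  refine ⟨hf.aestronglyMeasurable, ?_⟩
  rw [HasFiniteIntegral, lintegral_dirac' a hf.enorm]
  exact ENNReal.coe_lt_top

end SpectralAux

/-- Any spectral measure `H` can be approximated by a discrete spectral measure `H_m`
supported on the grid `V_{p,m}` so that the Pickands dependence functions are uniformly
within `p²/m` of each other. -/
theorem spectral_measure_discretization {p : ℕ} (hp : 0 < p) (H : Measure (Fin p → ℝ))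
    [IsFiniteMeasure H] (hsupp : ∀ᵐ v ∂H, v ∈ simplex p)
    (hmom : ∀ j, ∫ v, v j ∂H = 1) :
    ∀ m : ℕ, 1 ≤ m → ∃ Hm : Measure (Fin p → ℝ),
      IsFiniteMeasure Hm ∧
      Hm {v | ¬ (v ∈ simplex p ∧ ∀ j, ∃ k : ℤ, (m : ℝ) * v j = (k : ℝ))} = 0 ∧
      (∀ j, ∫ v, v j ∂Hm = 1) ∧
      ∀ w ∈ simplex p, |pickandsFn Hm w - pickandsFn H w| ≤ (p : ℝ) ^ 2 / m := by
  classical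
  intro m hm
  have hm0 : (0 : ℝ) < m := by exact_mod_cast hm
  haveI hne : Nonempty (Fin p) := Fin.pos_iff_nonempty.1 hp
  have hne' : (Finset.univ : Finset (Fin p)).Nonempty := Finset.univ_nonempty
  have hHsimp : H {v | v ∉ simplex p} = 0 := by
    simpa [ae_iff] using hsupp
  rcases lt_or_ge p 2 with hp1 | hp2
  · -- the case p = 1 : take Hm = H
    have hp1' : p = 1 := by omega
    subst hp1'
    refine ⟨H, inferInstance, ?_, hmom, ?_⟩
    · apply measure_mono_null _ hHsimp
      intro v hv
      simp only [Set.mem_setOf_eq] at hv ⊢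
      intro hvs
      apply hv
      refine ⟨hvs, fun j => ⟨(m : ℤ), ?_⟩⟩
      have hj : j = 0 := Subsingleton.elim _ _
      have hv0 : v 0 = 1 := by simpa [Fin.sum_univ_one] using hvs.2
      rw [hj, hv0]
      simp
    · intro w hw
      simp only [sub_self, abs_zero]
      positivity
  · -- the main case p ≥ 2
    set T := SpectralAux.Tmap m p with hT
    have hTm : Measurable T := SpectralAux.Tmap_measurable m p
    set e : Fin p → (Fin p → ℝ) := fun j i => if i = j then 1 else 0 with he
    set μ1 : Measure (Fin p → ℝ) := H.map T with hμ1
    haveI : IsFiniteMeasure μ1 := Measure.isFiniteMeasure_map H T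
    set cR : ℝ := m / (m + p) with hcR
    have hp0 : (0 : ℝ) < p := by exact_mod_cast hp
    have hmp0 : (0 : ℝ) < (m : ℝ) + p := by linarith
    have hcR0 : 0 < cR := by positivity
    have hcR1 : cR ≤ 1 := by
      rw [hcR, div_le_one hmp0]; linarith
    have hcRle : 1 - cR ≤ (p : ℝ) / m := by
      have h1 : 1 - cR = (p : ℝ) / ((m : ℝ) + p) := by rw [hcR]; field_simp; ring
      rw [h1]
      gcongr
      linarith
    set a : Fin p → ℝ := fun j => ∫ v, T v j ∂H with ha
    set b : Fin p → ℝ := fun j => 1 - cR * a j with hb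
    set Hm : Measure (Fin p → ℝ) :=
      ENNReal.ofReal cR • μ1 + ∑ j, ENNReal.ofReal (b j) • Measure.dirac (e j) with hHm
    -- integrability of coordinates
    have hIv : ∀ j, Integrable (fun v => v j) H := fun j =>
      SpectralAux.integrable_of_ae_bound (measurable_pi_apply j) 1
        (hsupp.mono fun v hv => abs_le.2 ⟨by linarith [(hv.1 j).1], (hv.1 j).2⟩)
    have hHU : (H Set.univ).toReal = p := by
      have h1 : ∫ (_ : Fin p → ℝ), (1 : ℝ) ∂H = (H Set.univ).toReal := by
        simp [integral_const, measureReal_def]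
      have h2 : ∫ v, (1 : ℝ) ∂H = ∫ v, ∑ j, v j ∂H :=
        integral_congr_ae (hsupp.mono fun v hv => (hv.2).symm)
      have h3 : ∫ v, ∑ j, v j ∂H = ∑ j, ∫ v, v j ∂H :=
        integral_finset_sum _ fun j _ => hIv j
      rw [← h1, h2, h3]
      simp [hmom]
    have hTsimp : ∀ᵐ v ∂H, T v ∈ simplex p :=
      hsupp.mono fun v hv => SpectralAux.Tmap_mem hp hm hv
    have hIT : ∀ j, Integrable (fun v => T v j) H := fun j =>
      SpectralAux.integrable_of_ae_bound ((measurable_pi_apply j).comp hTm) 1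
        (hTsimp.mono fun v hv => abs_le.2 ⟨by linarith [(hv.1 j).1], (hv.1 j).2⟩)
    have ha_err : ∀ j, |a j - 1| ≤ (p : ℝ) / m := by
      intro j
      have h1 : a j - 1 = ∫ v, (T v j - v j) ∂H := by
        rw [integral_sub (hIT j) (hIv j), hmom j, ha]
      have h2 : ∀ᵐ v ∂H, ‖T v j - v j‖ ≤ 1 / m :=
        hsupp.mono fun v hv => by
          simpa [Real.norm_eq_abs] using SpectralAux.Tmap_close hm hv j
      have h3 := norm_integral_le_of_norm_le_const (μ := H) h2
      rw [h1]
      calc |∫ v, (T v j - v j) ∂H| ≤ 1 / m * (H Set.univ).toReal := by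
            simpa [Real.norm_eq_abs, measureReal_def] using h3
        _ = (p : ℝ) / m := by rw [hHU]; ring
    have hb0 : ∀ j, 0 ≤ b j := by
      intro j
      have h1 : a j ≤ 1 + (p : ℝ) / m := by
        have := (abs_le.1 (ha_err j)).2; linarith
      have hkey : cR * (1 + (p : ℝ) / m) = 1 := by
        rw [hcR]; field_simp
      have h2 : cR * a j ≤ cR * (1 + (p : ℝ) / m) :=
        mul_le_mul_of_nonneg_left h1 hcR0.le
      rw [hb]
      simp only
      linarith [hkey ▸ h2]
    -- the master integration formula for Hm
    have hint : ∀ f : (Fin p → ℝ) → ℝ, Measurable f → (∀ v ∈ simplex p, |f v| ≤ 1) →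
        ∫ v, f v ∂Hm = cR * (∫ v, f (T v) ∂H) + ∑ j, b j * f (e j) := by
      intro f hf hfb
      have hIf : Integrable f μ1 := by
        rw [hμ1, integrable_map_measure hf.aestronglyMeasurable hTm.aemeasurable]
        exact SpectralAux.integrable_of_ae_bound (hf.comp hTm) 1
          (hTsimp.mono fun v hv => hfb _ hv)
      have hIfc : Integrable f (ENNReal.ofReal cR • μ1) :=
        hIf.smul_measure ENNReal.ofReal_ne_top
      have hIfd : Integrable f (∑ j, ENNReal.ofReal (b j) • Measure.dirac (e j)) :=
        integrable_finset_sum_measure.2 fun j _ =>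
          (SpectralAux.integrable_dirac_of_measurable hf _).smul_measure ENNReal.ofReal_ne_top
      rw [hHm, integral_add_measure hIfc hIfd, integral_smul_measure,
        integral_finset_sum_measure fun j _ =>
          (SpectralAux.integrable_dirac_of_measurable hf _).smul_measure ENNReal.ofReal_ne_top]
      congr 1
      · rw [ENNReal.toReal_ofReal hcR0.le, hμ1,
          integral_map hTm.aemeasurable hf.aestronglyMeasurable]
        simp
      · refine Finset.sum_congr rfl fun j _ => ?_
        rw [integral_smul_measure, integral_dirac' f (e j) hf.stronglyMeasurable,
          ENNReal.toReal_ofReal (hb0 j)]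
        simp
    have hesimp : ∀ j, e j ∈ simplex p := by
      intro j
      constructor
      · intro i
        by_cases h : i = j <;> simp [he, h]
      · simp [he, Finset.sum_ite_eq', Finset.mem_univ]
    -- measurability of the bad set
    have hbadmeas : MeasurableSet
        {v : Fin p → ℝ | ¬ (v ∈ simplex p ∧ ∀ j, ∃ k : ℤ, (m : ℝ) * v j = (k : ℝ))} := by
      have h1 : MeasurableSet {v : Fin p → ℝ | ∀ i, 0 ≤ v i ∧ v i ≤ 1} := by
        rw [show {v : Fin p → ℝ | ∀ i, 0 ≤ v i ∧ v i ≤ 1}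
            = ⋂ i, ({v : Fin p → ℝ | 0 ≤ v i} ∩ {v : Fin p → ℝ | v i ≤ 1}) from by
          ext v; simp [Set.mem_iInter, forall_and]]
        exact MeasurableSet.iInter fun i => ((measurableSet_le measurable_const
          (measurable_pi_apply i)).inter
          (measurableSet_le (measurable_pi_apply i) measurable_const))
      have h2 : MeasurableSet {v : Fin p → ℝ | ∑ i, v i = 1} :=
        (Finset.measurable_sum Finset.univ fun i _ => measurable_pi_apply i)
          (MeasurableSet.singleton (1 : ℝ))
      have h3 : MeasurableSet {v : Fin p → ℝ | ∀ j, ∃ k : ℤ, (m : ℝ) * v j = (k : ℝ)} := by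
        rw [show {v : Fin p → ℝ | ∀ j, ∃ k : ℤ, (m : ℝ) * v j = (k : ℝ)}
            = ⋂ j, (fun v : Fin p → ℝ => (m : ℝ) * v j) ⁻¹'
                (Set.range (fun k : ℤ => (k : ℝ))) from by
          ext v; simp [Set.mem_iInter, Set.mem_preimage, Set.mem_range, eq_comm]]
        exact MeasurableSet.iInter fun j =>
          (measurable_const.mul (measurable_pi_apply j))
            ((Set.countable_range _).measurableSet)
      exact (((h1.inter h2).inter h3).compl)
    -- the support condition
    have hHmbad : Hm {v | ¬ (v ∈ simplex p ∧ ∀ j, ∃ k : ℤ, (m : ℝ) * v j = (k : ℝ))} = 0 := by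
      have h1 : μ1 {v | ¬ (v ∈ simplex p ∧ ∀ j, ∃ k : ℤ, (m : ℝ) * v j = (k : ℝ))} = 0 := by
        rw [hμ1, Measure.map_apply hTm hbadmeas]
        apply measure_mono_null _ hHsimp
        intro v hv
        simp only [Set.mem_preimage, Set.mem_setOf_eq] at hv ⊢
        intro hvs
        exact hv ⟨SpectralAux.Tmap_mem hp hm hvs, SpectralAux.Tmap_grid hm v⟩
      have h2 : ∀ j, Measure.dirac (e j)
          {v : Fin p → ℝ | ¬ (v ∈ simplex p ∧ ∀ k, ∃ z : ℤ, (m : ℝ) * v k = (z : ℝ))} = 0 := by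
        intro j
        rw [Measure.dirac_apply' _ hbadmeas]
        have hmem : e j ∈ simplex p ∧ ∀ k, ∃ z : ℤ, (m : ℝ) * e j k = (z : ℝ) := by
          refine ⟨hesimp j, fun k => ?_⟩
          by_cases h : k = j
          · exact ⟨(m : ℤ), by simp [he, h]⟩
          · exact ⟨0, by simp [he, h]⟩
        simp only [Set.indicator_apply, Set.mem_setOf_eq]
        rw [if_neg (by simpa using hmem)]
      rw [hHm]
      simp only [Measure.coe_add, Pi.add_apply, Measure.smul_apply, smul_eq_mul,
        Measure.coe_finset_sum, Finset.sum_apply]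
      rw [h1]
      simp only [mul_zero, zero_add]
      refine Finset.sum_eq_zero fun j _ => by rw [h2 j, mul_zero]
    -- moments of Hm
    have hmomHm : ∀ j, ∫ v, v j ∂Hm = 1 := by
      intro j
      have hcoord := hint (fun v => v j) (measurable_pi_apply j)
        (fun v hv => abs_le.2 ⟨by linarith [(hv.1 j).1], (hv.1 j).2⟩)
      rw [hcoord]
      have hsum : ∑ i, b i * e i j = b j := by
        have : ∀ i, b i * e i j = if j = i then b i else 0 := by
          intro i
          by_cases h : j = i <;> simp [he, h, eq_comm]
        simp_rw [this]
        simp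
      have hTa : (∫ v, T v j ∂H) = a j := rfl
      rw [hTa, hsum, hb]
      simp only
      ring
    haveI hHmfin : IsFiniteMeasure Hm := by
      constructor
      rw [hHm]
      simp only [Measure.coe_add, Pi.add_apply, Measure.smul_apply, smul_eq_mul,
        Measure.coe_finset_sum, Finset.sum_apply]
      apply ENNReal.add_lt_top.2
      constructor
      · exact ENNReal.mul_lt_top ENNReal.ofReal_lt_top (measure_lt_top μ1 _)
      · rw [show (∑ j, ENNReal.ofReal (b j) * Measure.dirac (e j) Set.univ) =
            ∑ j, ENNReal.ofReal (b j) * Measure.dirac (e j) Set.univ from rfl]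
        refine (ENNReal.sum_lt_top).2 fun j _ =>
          ENNReal.mul_lt_top ENNReal.ofReal_lt_top (measure_lt_top _ _)
    refine ⟨Hm, hHmfin, hHmbad, hmomHm, ?_⟩
    intro w hw
    have hw0 : ∀ j, 0 ≤ w j := fun j => (hw.1 j).1
    obtain ⟨S, hSapp⟩ : ∃ S : (Fin p → ℝ) → ℝ,
        ∀ v, S v = Finset.univ.sup' hne' (fun j => v j * w j) := ⟨_, fun v => rfl⟩
    have hSsup : ∀ v : Fin p → ℝ, (⨆ j, v j * w j) = S v := fun v => by
      rw [hSapp]; exact SpectralAux.iSup_eq_sup' hp hne' _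
    have hSmeas : Measurable S := by
      have hfun : S = Finset.univ.sup' hne' (fun (j : Fin p) (v : Fin p → ℝ) => v j * w j) :=
        funext fun v => by rw [hSapp, Finset.sup'_apply]
      rw [hfun]
      exact Finset.measurable_sup' hne' fun j _ => (measurable_pi_apply j).mul_const _
    have hSge : ∀ (v : Fin p → ℝ) (j : Fin p), v j * w j ≤ S v := fun v j => by
      rw [hSapp]; exact Finset.le_sup' (fun j => v j * w j) (Finset.mem_univ j)
    have hSle : ∀ (v : Fin p → ℝ) (c : ℝ), (∀ j, v j * w j ≤ c) → S v ≤ c := fun v c h => by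
      rw [hSapp]; exact Finset.sup'_le _ _ fun j _ => h j
    have hSb : ∀ v ∈ simplex p, |S v| ≤ 1 := by
      intro v hv
      rw [abs_le]
      constructor
      · have h1 : v hne.some * w hne.some ≤ S v := hSge v hne.some
        have h2 : 0 ≤ v hne.some * w hne.some := mul_nonneg (hv.1 _).1 (hw0 _)
        linarith
      · refine hSle v 1 fun j => ?_
        calc v j * w j ≤ 1 * 1 :=
              mul_le_mul (hv.1 j).2 (hw.1 j).2 (hw0 j) zero_le_one
          _ = 1 := by ring
    have hSA : pickandsFn H w = ∫ v, S v ∂H := by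
      simp only [pickandsFn, hSsup]
    have hAmeq : pickandsFn Hm w = cR * (∫ v, S (T v) ∂H) + ∑ j, b j * S (e j) := by
      have hpick : pickandsFn Hm w = ∫ v, S v ∂Hm := by simp only [pickandsFn, hSsup]
      rw [hpick]
      exact hint S hSmeas hSb
    set A : ℝ := ∫ v, S v ∂H with hAdef
    set I : ℝ := ∫ v, S (T v) ∂H with hIdef
    have hSe : ∀ j, S (e j) = w j := by
      intro j
      apply le_antisymm
      · refine hSle (e j) (w j) fun i => ?_
        by_cases h : i = j
        · subst h; simp [he]
        · simp [he, h, hw0 j]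
      · have h1 := hSge (e j) j
        simpa [he] using h1
    obtain ⟨W, hWapp⟩ : ∃ W : ℝ, W = Finset.univ.sup' hne' w := ⟨_, rfl⟩
    have hWle1 : W ≤ 1 := by
      rw [hWapp]; exact Finset.sup'_le _ _ fun j _ => (hw.1 j).2
    have hwW : ∀ j, w j ≤ W := fun j => by
      rw [hWapp]; exact Finset.le_sup' w (Finset.mem_univ j)
    have hW0 : 0 ≤ W := le_trans (hw0 hne.some) (hwW hne.some)
    -- pointwise comparison of the two sup's
    have hIS : ∀ᵐ v ∂H, |S (T v) - S v| ≤ W / m := by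
      refine hsupp.mono fun v hv => ?_
      have hSup : ∀ v' v'' : Fin p → ℝ, (∀ j, v' j ≤ v'' j + 1 / (m : ℝ)) →
          S v' ≤ S v'' + W / m := by
        intro v' v'' hcl
        refine hSle v' _ fun j => ?_
        have h1 : v' j * w j ≤ (v'' j + 1 / m) * w j :=
          mul_le_mul_of_nonneg_right (hcl j) (hw0 j)
        have h2 : v'' j * w j ≤ S v'' := hSge v'' j
        have h3 : w j / m ≤ W / m := by gcongr; exact hwW j
        have h4 : (v'' j + 1 / m) * w j = v'' j * w j + w j / m := by ring
        calc v' j * w j ≤ v'' j * w j + w j / m := by rw [h4] at h1; linarith [h1]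
          _ ≤ S v'' + W / m := by linarith
      have hclose := fun j => abs_le.1 (SpectralAux.Tmap_close hm hv j)
      have h1 : S (T v) ≤ S v + W / m :=
        hSup _ _ fun j => by linarith [(hclose j).2]
      have h2 : S v ≤ S (T v) + W / m :=
        hSup _ _ fun j => by linarith [(hclose j).1]
      rw [abs_le]
      constructor <;> linarith
    have hISint : Integrable (fun v => S (T v)) H :=
      SpectralAux.integrable_of_ae_bound (hSmeas.comp hTm) 1
        (hTsimp.mono fun v hv => hSb _ hv)
    have hSint : Integrable S H :=
      SpectralAux.integrable_of_ae_bound hSmeas 1 (hsupp.mono fun v hv => hSb _ hv)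
    have hF1 : |I - A| ≤ W / m * p := by
      have h1 : I - A = ∫ v, (S (T v) - S v) ∂H := by
        rw [hIdef, hAdef, integral_sub hISint hSint]
      have h2' : ∀ᵐ v ∂H, ‖S (T v) - S v‖ ≤ W / m :=
        hIS.mono fun v hv => by simpa [Real.norm_eq_abs] using hv
      have h2 := norm_integral_le_of_norm_le_const (μ := H) h2'
      rw [h1]
      calc |∫ v, (S (T v) - S v) ∂H| ≤ W / m * (H Set.univ).toReal := by
            simpa [Real.norm_eq_abs, measureReal_def] using h2
        _ = W / m * p := by rw [hHU]
    have hAW : W ≤ A := by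
      rw [hWapp]
      apply Finset.sup'_le
      intro j _
      have h1 : ∫ v, v j * w j ∂H = w j := by
        rw [integral_mul_const, hmom j, one_mul]
      calc w j = ∫ v, v j * w j ∂H := h1.symm
        _ ≤ A := integral_mono ((hIv j).mul_const _) hSint fun v => hSge v j
    have hA1 : A ≤ 1 := by
      have h1 : ∀ᵐ v ∂H, S v ≤ ∑ j, v j * w j :=
        hsupp.mono fun v hv => hSle v _ fun j =>
          Finset.single_le_sum (fun i _ => mul_nonneg (hv.1 i).1 (hw0 i)) (Finset.mem_univ j)
      have h2 : Integrable (fun v => ∑ j, v j * w j) H :=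
        integrable_finset_sum _ fun j _ => (hIv j).mul_const _
      calc A ≤ ∫ v, ∑ j, v j * w j ∂H := integral_mono_ae hSint h2 h1
        _ = ∑ j, w j := by
            rw [integral_finset_sum _ fun j _ => (hIv j).mul_const _]
            refine Finset.sum_congr rfl fun j _ => ?_
            rw [integral_mul_const, hmom j, one_mul]
        _ = 1 := hw.2
    set E : ℝ := ∑ j, a j * w j with hEdef
    have hE : |E - 1| ≤ (p : ℝ) / m := by
      have h1 : E - 1 = ∑ j, (a j - 1) * w j := by
        simp only [sub_mul, Finset.sum_sub_distrib, hEdef, one_mul]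
        rw [hw.2]
      rw [h1]
      calc |∑ j, (a j - 1) * w j| ≤ ∑ j, |(a j - 1) * w j| :=
            Finset.abs_sum_le_sum_abs _ _
        _ ≤ ∑ j, ((p : ℝ) / m) * w j := by
            refine Finset.sum_le_sum fun j _ => ?_
            rw [abs_mul, abs_of_nonneg (hw0 j)]
            exact mul_le_mul_of_nonneg_right (ha_err j) (hw0 j)
        _ = (p : ℝ) / m := by rw [← Finset.mul_sum, hw.2, mul_one]
    have hsumbw : ∑ j, b j * w j = 1 - cR * E := by
      have h1 : ∀ j, b j * w j = w j - cR * (a j * w j) := by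
        intro j; rw [hb]; ring
      simp_rw [h1]
      rw [Finset.sum_sub_distrib, hw.2, ← Finset.mul_sum, hEdef]
    -- combine everything
    rw [hAmeq, hSA]
    simp_rw [hSe]
    rw [hsumbw]
    have hkey : cR * I + (1 - cR * E) - A
        = cR * (I - A) + (1 - cR) * (1 - A) + cR * (1 - E) := by ring
    rw [hkey]
    have hb1 : |cR * (I - A)| ≤ W / m * p := by
      rw [abs_mul, abs_of_nonneg hcR0.le]
      calc cR * |I - A| ≤ 1 * (W / m * p) :=
            mul_le_mul hcR1 hF1 (abs_nonneg _) zero_le_one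
        _ = W / m * p := by ring
    have hb2 : |(1 - cR) * (1 - A)| ≤ (p : ℝ) / m * (1 - W) := by
      rw [abs_of_nonneg (mul_nonneg (by linarith) (by linarith))]
      exact mul_le_mul hcRle (by linarith) (by linarith) (by positivity)
    have hb3 : |cR * (1 - E)| ≤ (p : ℝ) / m := by
      rw [abs_mul, abs_of_nonneg hcR0.le]
      calc cR * |1 - E| ≤ 1 * ((p : ℝ) / m) := by
            rw [abs_sub_comm]
            exact mul_le_mul hcR1 hE (abs_nonneg _) zero_le_one
        _ = (p : ℝ) / m := by ring
    have htri : |cR * (I - A) + (1 - cR) * (1 - A) + cR * (1 - E)|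
        ≤ |cR * (I - A)| + |(1 - cR) * (1 - A)| + |cR * (1 - E)| :=
      (abs_add_le _ _).trans (by linarith [abs_add_le (cR * (I - A)) ((1 - cR) * (1 - A))])
    have hsum2 : W / m * p + (p : ℝ) / m * (1 - W) + (p : ℝ) / m = 2 * p / m := by
      field_simp
      ring
    have hfin : 2 * (p : ℝ) / m ≤ (p : ℝ) ^ 2 / m := by
      have h2le : (2 : ℝ) ≤ p := by exact_mod_cast hp2
      rw [div_le_div_iff₀ hm0 hm0]
      nlinarith [mul_nonneg (mul_nonneg (sub_nonneg.2 h2le) hp0.le) hm0.le]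
    linarith [htri, hb1, hb2, hb3]
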